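/- Let X : [0,T] → ℝ^d be continuously differentiable and suppose K : {(s,t) : 0 ≤ s ≤ t ≤ T} → ℝ is a continuous solution of the quadratic integral equation K(s,t) = 1 − Σ_{ι=1}^d ∫_s^t ∫_s^r K(s,u) K(u,r) X′^{(ι)}(u) X′^{(ι)}(r) du dr for all 0 ≤ s ≤ t ≤ T. Then K is the unique continuous solution of this equation (any two continuous solutions coincide). -/

import Mathlib

open MeasureTheory intervalIntegral Set Filter

private lemma aux_cont {G : ℝ × ℝ → ℝ} (hG : Continuous G) (s : ℝ) :
    Continuous fun r : ℝ => ∫ u in s..r, G (u, r) := by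
  have h : Continuous (Function.uncurry fun (r u : ℝ) => G (u, r)) :=
    hG.comp (continuous_snd.prodMk continuous_fst)
  exact intervalIntegral.continuous_parametric_intervalIntegral_of_continuous (μ := volume)
      (f := fun r u => G (u, r)) (a₀ := s) h continuous_id

private lemma key (d : ℕ) (T : ℝ) (hT : 0 ≤ T) (X' : Fin d → ℝ → ℝ)
    (hX' : ∀ i, Continuous (X' i))
    (K K' : ℝ → ℝ → ℝ)
    (hKc : Continuous fun p : ℝ × ℝ => K p.1 p.2)
    (hK'c : Continuous fun p : ℝ × ℝ => K' p.1 p.2)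
    (hK : ∀ s t, 0 ≤ s → s ≤ t → t ≤ T →
      K s t = 1 - ∑ ι : Fin d, ∫ r in s..t, ∫ u in s..r,
        K s u * K u r * X' ι u * X' ι r)
    (hK' : ∀ s t, 0 ≤ s → s ≤ t → t ≤ T →
      K' s t = 1 - ∑ ι : Fin d, ∫ r in s..t, ∫ u in s..r,
        K' s u * K' u r * X' ι u * X' ι r) :
    ∀ s t, 0 ≤ s → s ≤ t → t ≤ T → K s t = K' s t := by
  -- the compact triangle
  set Δ : Set (ℝ × ℝ) := {p : ℝ × ℝ | 0 ≤ p.1 ∧ p.1 ≤ p.2 ∧ p.2 ≤ T} with hΔdef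
  have hΔclosed : IsClosed Δ := by
    apply IsClosed.inter (isClosed_le continuous_const continuous_fst)
    exact IsClosed.inter (isClosed_le continuous_fst continuous_snd)
      (isClosed_le continuous_snd continuous_const)
  have hΔc : IsCompact Δ := by
    refine IsCompact.of_isClosed_subset (isCompact_Icc (a := ((0 : ℝ), (0 : ℝ))) (b := (T, T)))
      hΔclosed ?_
    rintro ⟨a, b⟩ ⟨h1, h2, h3⟩
    exact ⟨⟨h1, h1.trans h2⟩, ⟨h2.trans h3, h3⟩⟩
  have hΔ00 : ((0 : ℝ), (0 : ℝ)) ∈ Δ := ⟨le_rfl, le_rfl, hT⟩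
  -- bound on K, K'
  obtain ⟨M₁, hM₁⟩ := hΔc.exists_bound_of_continuousOn hKc.continuousOn
  obtain ⟨M₂, hM₂⟩ := hΔc.exists_bound_of_continuousOn hK'c.continuousOn
  set M : ℝ := max M₁ M₂ with hMdef
  have hM : ∀ p ∈ Δ, |K p.1 p.2| ≤ M ∧ |K' p.1 p.2| ≤ M := fun p hp =>
    ⟨(hM₁ p hp).trans (le_max_left _ _), (hM₂ p hp).trans (le_max_right _ _)⟩
  have hM0 : 0 ≤ M := (abs_nonneg _).trans (hM _ hΔ00).1
  -- bound on X'
  obtain ⟨C, hCa⟩ := (isCompact_Icc (a := (0:ℝ)) (b := T)).exists_bound_of_continuousOn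
    ((continuous_norm.comp (continuous_pi fun i => hX' i)).continuousOn
      (f := fun u => ‖(fun i => X' i u : Fin d → ℝ)‖))
  have hC : ∀ (i : Fin d), ∀ u ∈ Icc (0:ℝ) T, |X' i u| ≤ C := by
    intro i u hu
    have h1 : |X' i u| ≤ ‖(fun j => X' j u : Fin d → ℝ)‖ := by
      simpa [Real.norm_eq_abs] using norm_le_pi_norm (fun j => X' j u : Fin d → ℝ) i
    have h2 := hCa u hu
    rw [Real.norm_eq_abs, abs_of_nonneg (norm_nonneg _)] at h2
    exact h1.trans h2
  have hC0 : 0 ≤ C := by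
    have := hCa 0 ⟨le_rfl, hT⟩
    have h0 : (0:ℝ) ≤ ‖(fun i => X' i 0 : Fin d → ℝ)‖ := norm_nonneg _
    rw [Real.norm_eq_abs, abs_of_nonneg h0] at this
    linarith
  -- the difference and its sup function
  set D : ℝ → ℝ → ℝ := fun s t => K s t - K' s t with hDdef
  have hDc : Continuous fun p : ℝ × ℝ => |D p.1 p.2| := (hKc.sub hK'c).abs
  set F : ℝ → ℝ := fun t => sSup ((fun p : ℝ × ℝ => |D p.1 p.2|) '' (Δ ∩ {p | p.2 ≤ t}))
    with hFdef
  have hSc : ∀ t : ℝ, IsCompact (Δ ∩ {p : ℝ × ℝ | p.2 ≤ t}) := fun t =>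
    hΔc.inter_right (isClosed_le continuous_snd continuous_const)
  have hbdd : ∀ t : ℝ, BddAbove ((fun p : ℝ × ℝ => |D p.1 p.2|) '' (Δ ∩ {p | p.2 ≤ t})) :=
    fun t => ((hSc t).image_of_continuousOn hDc.continuousOn).bddAbove
  have hFle : ∀ t s u : ℝ, 0 ≤ s → s ≤ u → u ≤ T → u ≤ t → |D s u| ≤ F t := by
    intro t s u h1 h2 h3 h4
    exact le_csSup (hbdd t) (mem_image_of_mem _
      (show (s, u) ∈ Δ ∩ {p : ℝ × ℝ | p.2 ≤ t} from ⟨⟨h1, h2, h3⟩, h4⟩))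
  have hF0 : ∀ t : ℝ, 0 ≤ t → 0 ≤ F t := fun t ht =>
    (abs_nonneg (D 0 0)).trans (hFle t 0 0 le_rfl le_rfl hT ht)
  have hFmono : ∀ t₁ t₂ : ℝ, 0 ≤ t₁ → t₁ ≤ t₂ → F t₁ ≤ F t₂ := by
    intro t₁ t₂ h1 h2
    apply csSup_le_csSup (hbdd t₂)
    · exact Set.Nonempty.image _ ⟨((0:ℝ),(0:ℝ)), ⟨hΔ00, h1⟩⟩
    · exact image_mono (inter_subset_inter_right _ fun p hp => le_trans hp h2)
  have hFint : ∀ a b : ℝ, 0 ≤ a → a ≤ b → b ≤ T → IntervalIntegrable F volume a b := by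
    intro a b h1 h2 h3
    apply MonotoneOn.intervalIntegrable
    rw [uIcc_of_le h2]
    intro x hx y hy hxy
    exact hFmono x y (h1.trans hx.1) hxy
  -- constant
  set A : ℝ := (d : ℝ) * (2 * M * (C * C) * T) with hAdef
  have hA0 : 0 ≤ A := mul_nonneg (Nat.cast_nonneg _)
    (mul_nonneg (mul_nonneg (mul_nonneg (by norm_num) hM0) (mul_self_nonneg C)) hT)
  -- core Gronwall-type inequality
  have hcore : ∀ s t : ℝ, 0 ≤ s → s ≤ t → t ≤ T →
      |D s t| ≤ A * ∫ r in (0:ℝ)..t, F r := by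
    intro s t hs hst htT
    -- integrability of the outer integrands
    have hGq : Continuous fun q : ℝ × ℝ => K s q.1 * K q.1 q.2 :=
      (hKc.comp (continuous_const.prodMk continuous_fst)).mul
        (hKc.comp (continuous_fst.prodMk continuous_snd))
    have hGq' : Continuous fun q : ℝ × ℝ => K' s q.1 * K' q.1 q.2 :=
      (hK'c.comp (continuous_const.prodMk continuous_fst)).mul
        (hK'c.comp (continuous_fst.prodMk continuous_snd))
    have hKint : ∀ ι : Fin d, IntervalIntegrable
        (fun r => ∫ u in s..r, K s u * K u r * X' ι u * X' ι r) volume s t := by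
      intro ι
      have hG : Continuous fun q : ℝ × ℝ =>
          K s q.1 * K q.1 q.2 * X' ι q.1 * X' ι q.2 :=
        (hGq.mul ((hX' ι).comp continuous_fst)).mul ((hX' ι).comp continuous_snd)
      exact (aux_cont hG s).intervalIntegrable s t
    have hK'int : ∀ ι : Fin d, IntervalIntegrable
        (fun r => ∫ u in s..r, K' s u * K' u r * X' ι u * X' ι r) volume s t := by
      intro ι
      have hG : Continuous fun q : ℝ × ℝ =>
          K' s q.1 * K' q.1 q.2 * X' ι q.1 * X' ι q.2 :=
        (hGq'.mul ((hX' ι).comp continuous_fst)).mul ((hX' ι).comp continuous_snd)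
      exact (aux_cont hG s).intervalIntegrable s t
    -- inner integrands are continuous in u
    have hinnerK : ∀ (ι : Fin d) (r : ℝ),
        Continuous fun u => K s u * K u r * X' ι u * X' ι r := by
      intro ι r
      exact (((hKc.comp (continuous_const.prodMk continuous_id)).mul
        (hKc.comp (continuous_id.prodMk continuous_const))).mul (hX' ι)).mul continuous_const
    have hinnerK' : ∀ (ι : Fin d) (r : ℝ),
        Continuous fun u => K' s u * K' u r * X' ι u * X' ι r := by
      intro ι r
      exact (((hK'c.comp (continuous_const.prodMk continuous_id)).mul
        (hK'c.comp (continuous_id.prodMk continuous_const))).mul (hX' ι)).mul continuous_const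
    -- express the difference as a single double integral
    have hDst : D s t = ∑ ι : Fin d, ∫ r in s..t, ∫ u in s..r,
        (K' s u * K' u r - K s u * K u r) * (X' ι u * X' ι r) := by
      have h1 := hK s t hs hst htT
      have h2 := hK' s t hs hst htT
      have h3 : D s t = ∑ ι : Fin d,
          ((∫ r in s..t, ∫ u in s..r, K' s u * K' u r * X' ι u * X' ι r) -
           (∫ r in s..t, ∫ u in s..r, K s u * K u r * X' ι u * X' ι r)) := by
        show K s t - K' s t = _
        rw [h1, h2, Finset.sum_sub_distrib]
        ring
      rw [h3]
      refine Finset.sum_congr rfl fun ι _ => ?_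
      rw [← intervalIntegral.integral_sub (hK'int ι) (hKint ι)]
      apply intervalIntegral.integral_congr
      intro r _
      show (∫ u in s..r, K' s u * K' u r * X' ι u * X' ι r) -
          (∫ u in s..r, K s u * K u r * X' ι u * X' ι r) =
        ∫ u in s..r, (K' s u * K' u r - K s u * K u r) * (X' ι u * X' ι r)
      rw [← intervalIntegral.integral_sub ((hinnerK' ι r).intervalIntegrable s r)
        ((hinnerK ι r).intervalIntegrable s r)]
      apply intervalIntegral.integral_congr
      intro u _
      ring
    -- pointwise bound on the inner integral
    have hpt : ∀ (ι : Fin d) (r : ℝ), r ∈ Set.Ioc s t →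
        ‖∫ u in s..r, (K' s u * K' u r - K s u * K u r) * (X' ι u * X' ι r)‖ ≤
          2 * M * (C * C) * T * F r := by
      intro ι r hr
      have hsr : s ≤ r := hr.1.le
      have hrT : r ≤ T := hr.2.trans htT
      have hFr : 0 ≤ F r := hF0 r (hs.trans hsr)
      have hbnd : ∀ u ∈ Set.uIoc s r,
          ‖(K' s u * K' u r - K s u * K u r) * (X' ι u * X' ι r)‖ ≤
            2 * M * (C * C) * F r := by
        intro u hu
        rw [Set.uIoc_of_le hsr] at hu
        have hsu : s ≤ u := hu.1.le
        have hur : u ≤ r := hu.2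
        have huT : u ≤ T := hur.trans hrT
        have h1 : |K u r| ≤ M := (hM (u, r) ⟨hs.trans hsu, hur, hrT⟩).1
        have h2 : |K' s u| ≤ M := (hM (s, u) ⟨hs, hsu, huT⟩).2
        have h3 : |D s u| ≤ F r := hFle r s u hs hsu huT hur
        have h4 : |D u r| ≤ F r := hFle r u r (hs.trans hsu) hur hrT le_rfl
        have h5 : |X' ι u| ≤ C := hC ι u ⟨hs.trans hsu, huT⟩
        have h6 : |X' ι r| ≤ C := hC ι r ⟨hs.trans hsr, hrT⟩
        have hid : K' s u * K' u r - K s u * K u r =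
            -(D s u * K u r) - K' s u * D u r := by
          show _ = -((K s u - K' s u) * K u r) - K' s u * (K u r - K' u r)
          ring
        have h7 : |K' s u * K' u r - K s u * K u r| ≤ 2 * M * F r := by
          rw [hid]
          calc |(-(D s u * K u r)) - K' s u * D u r|
              ≤ |(-(D s u * K u r))| + |K' s u * D u r| := abs_sub _ _
            _ = |D s u| * |K u r| + |K' s u| * |D u r| := by
                rw [abs_neg, abs_mul, abs_mul]
            _ ≤ F r * M + M * (F r) := by
                have := abs_nonneg (D s u)
                have := abs_nonneg (K' s u)
                have := abs_nonneg (K u r)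
                have := abs_nonneg (D u r)
                gcongr
            _ = 2 * M * F r := by ring
        calc ‖(K' s u * K' u r - K s u * K u r) * (X' ι u * X' ι r)‖
            = |K' s u * K' u r - K s u * K u r| * (|X' ι u| * |X' ι r|) := by
              rw [Real.norm_eq_abs, abs_mul, abs_mul]
          _ ≤ (2 * M * F r) * (C * C) := by
              have := abs_nonneg (X' ι u)
              have := abs_nonneg (X' ι r)
              have hMF : (0:ℝ) ≤ 2 * M * F r := by positivity
              gcongr
          _ = 2 * M * (C * C) * F r := by ring
      have := intervalIntegral.norm_integral_le_of_norm_le_const hbnd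
      have habs : |r - s| ≤ T := by
        rw [abs_of_nonneg (by linarith)]
        linarith
      calc ‖∫ u in s..r, (K' s u * K' u r - K s u * K u r) * (X' ι u * X' ι r)‖
          ≤ 2 * M * (C * C) * F r * |r - s| := this
        _ ≤ 2 * M * (C * C) * F r * T := by
            have : (0:ℝ) ≤ 2 * M * (C * C) * F r := by positivity
            exact mul_le_mul_of_nonneg_left habs this
        _ = 2 * M * (C * C) * T * F r := by ring
    -- integrate the bound
    have hFst : IntervalIntegrable F volume s t := hFint s t hs hst htT
    have hF0t : IntervalIntegrable F volume 0 t := hFint 0 t le_rfl (hs.trans hst) htT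
    have hF0s : IntervalIntegrable F volume 0 s := hFint 0 s le_rfl hs (hst.trans htT)
    have hIst : ∫ r in s..t, F r ≤ ∫ r in (0:ℝ)..t, F r := by
      have hadd := intervalIntegral.integral_add_adjacent_intervals hF0s hFst
      have hnn : 0 ≤ ∫ r in (0:ℝ)..s, F r :=
        intervalIntegral.integral_nonneg hs fun r hr => hF0 r hr.1
      linarith
    have hInn : 0 ≤ ∫ r in s..t, F r :=
      intervalIntegral.integral_nonneg hst fun r hr => hF0 r (hs.trans hr.1)
    have hone : ∀ ι : Fin d,
        |∫ r in s..t, ∫ u in s..r, (K' s u * K' u r - K s u * K u r) * (X' ι u * X' ι r)| ≤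
          2 * M * (C * C) * T * ∫ r in (0:ℝ)..t, F r := by
      intro ι
      have hb : ∀ᵐ r ∂(volume.restrict (Set.uIoc s t)),
          ‖∫ u in s..r, (K' s u * K' u r - K s u * K u r) * (X' ι u * X' ι r)‖ ≤
            2 * M * (C * C) * T * F r := by
        refine (ae_restrict_iff' measurableSet_uIoc).mpr (Filter.Eventually.of_forall ?_)
        intro r hr
        rw [Set.uIoc_of_le hst] at hr
        exact hpt ι r hr
      have hgi : IntervalIntegrable (fun r => 2 * M * (C * C) * T * F r) volume s t :=
        hFst.const_mul _
      have := (intervalIntegral.norm_integral_le_of_norm_le hst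
        ((ae_restrict_iff' measurableSet_Ioc).mp (by rwa [Set.uIoc_of_le hst] at hb)) hgi).trans
        (le_abs_self _)
      rw [intervalIntegral.integral_const_mul] at this
      have h2 : |2 * M * (C * C) * T * ∫ r in s..t, F r| =
          2 * M * (C * C) * T * ∫ r in s..t, F r := by
        apply abs_of_nonneg
        positivity
      rw [h2] at this
      refine this.trans ?_
      have hc : (0:ℝ) ≤ 2 * M * (C * C) * T := by positivity
      exact mul_le_mul_of_nonneg_left hIst hc
    calc |D s t| = |∑ ι : Fin d, ∫ r in s..t, ∫ u in s..r,
          (K' s u * K' u r - K s u * K u r) * (X' ι u * X' ι r)| := by rw [hDst]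
      _ ≤ ∑ ι : Fin d, |∫ r in s..t, ∫ u in s..r,
          (K' s u * K' u r - K s u * K u r) * (X' ι u * X' ι r)| :=
            Finset.abs_sum_le_sum_abs _ _
      _ ≤ ∑ _ι : Fin d, 2 * M * (C * C) * T * ∫ r in (0:ℝ)..t, F r :=
            Finset.sum_le_sum fun ι _ => hone ι
      _ = A * ∫ r in (0:ℝ)..t, F r := by
            rw [Finset.sum_const, Finset.card_univ, Fintype.card_fin, nsmul_eq_mul, hAdef]
            ring
  -- Gronwall inequality for F
  have hgron : ∀ t : ℝ, 0 ≤ t → t ≤ T → F t ≤ A * ∫ r in (0:ℝ)..t, F r := by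
    intro t ht0 htT
    have hrhs : 0 ≤ A * ∫ r in (0:ℝ)..t, F r :=
      mul_nonneg hA0 (intervalIntegral.integral_nonneg ht0 fun r hr => hF0 r hr.1)
    apply Real.sSup_le _ hrhs
    rintro x ⟨p, ⟨hpΔ, hpt2⟩, rfl⟩
    obtain ⟨h1, h2, h3⟩ := hpΔ
    have hcore' := hcore p.1 p.2 h1 h2 h3
    have hmono : ∫ r in (0:ℝ)..p.2, F r ≤ ∫ r in (0:ℝ)..t, F r := by
      have hadd := intervalIntegral.integral_add_adjacent_intervals
        (hFint 0 p.2 le_rfl (h1.trans h2) h3) (hFint p.2 t (h1.trans h2) hpt2 htT)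
      have hnn : 0 ≤ ∫ r in p.2..t, F r :=
        intervalIntegral.integral_nonneg hpt2 fun r hr => hF0 r ((h1.trans h2).trans hr.1)
      linarith
    exact hcore'.trans (mul_le_mul_of_nonneg_left hmono hA0)
  -- iterate
  have hiter : ∀ n : ℕ, ∀ t : ℝ, 0 ≤ t → t ≤ T →
      F t ≤ F T * ((A * t) ^ n / (n.factorial : ℝ)) := by
    intro n
    induction n with
    | zero => intro t h0 h1; simpa using hFmono t T h0 h1
    | succ n ih =>
      intro t h0 h1
      have step1 := hgron t h0 h1
      have step2 : ∫ r in (0:ℝ)..t, F r ≤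
          ∫ r in (0:ℝ)..t, F T * ((A * r) ^ n / (n.factorial : ℝ)) := by
        apply intervalIntegral.integral_mono_on h0 (hFint 0 t le_rfl h0 h1)
        · exact (continuous_const.mul
            (((continuous_const.mul continuous_id).pow n).div_const _)).intervalIntegrable 0 t
        · intro r hr
          exact ih r hr.1 (hr.2.trans h1)
      have step3 : ∫ r in (0:ℝ)..t, F T * ((A * r) ^ n / (n.factorial : ℝ)) =
          (F T * A ^ n / (n.factorial : ℝ)) * (t ^ (n + 1) / (n + 1)) := by
        have he : ∀ r : ℝ, F T * ((A * r) ^ n / (n.factorial : ℝ)) =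
            (F T * A ^ n / (n.factorial : ℝ)) * r ^ n := fun r => by ring
        simp_rw [he]
        rw [intervalIntegral.integral_const_mul, integral_pow]
        norm_num
      have hfac : ((n.factorial : ℝ)) ≠ 0 := Nat.cast_ne_zero.mpr n.factorial_ne_zero
      have hn1 : ((n : ℝ) + 1) ≠ 0 := by positivity
      have heq : A * ((F T * A ^ n / (n.factorial : ℝ)) * (t ^ (n + 1) / (n + 1))) =
          F T * ((A * t) ^ (n + 1) / ((n + 1).factorial : ℝ)) := by
        rw [Nat.factorial_succ]
        push_cast
        field_simp
        ring
      calc F t ≤ A * ∫ r in (0:ℝ)..t, F r := step1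
        _ ≤ A * ((F T * A ^ n / (n.factorial : ℝ)) * (t ^ (n + 1) / (n + 1))) := by
            rw [← step3]; exact mul_le_mul_of_nonneg_left step2 hA0
        _ = F T * ((A * t) ^ (n + 1) / ((n + 1).factorial : ℝ)) := heq
  -- conclude F T = 0
  have hFT0 : F T = 0 := by
    have htend : Filter.Tendsto (fun n : ℕ => F T * ((A * T) ^ n / (n.factorial : ℝ)))
        Filter.atTop (nhds 0) := by
      have := (FloorSemiring.tendsto_pow_div_factorial_atTop (A * T)).const_mul (F T)
      simpa using this
    have hle : F T ≤ 0 := ge_of_tendsto' htend fun n => hiter n T hT le_rfl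
    exact le_antisymm hle (hF0 T hT)
  intro s t hs hst htT
  have hle := hFle T s t hs hst htT htT
  rw [hFT0] at hle
  have : D s t = 0 := abs_eq_zero.mp (le_antisymm hle (abs_nonneg _))
  exact sub_eq_zero.mp this

/-- uniqueness of continuous solutions of the Schwinger–Dyson
kernel equation driven by a continuously differentiable path `X`. -/
theorem stmt15 (d : ℕ) (T : ℝ) (hT : 0 ≤ T) (X : ℝ → Fin d → ℝ) (X' : Fin d → ℝ → ℝ)
    (hX : ∀ i t, HasDerivAt (fun u => X u i) (X' i t) t)
    (hX' : ∀ i, Continuous (X' i))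
    (K K' : ℝ → ℝ → ℝ)
    (hKc : ContinuousOn (fun p : ℝ × ℝ => K p.1 p.2)
      {p : ℝ × ℝ | 0 ≤ p.1 ∧ p.1 ≤ p.2 ∧ p.2 ≤ T})
    (hK'c : ContinuousOn (fun p : ℝ × ℝ => K' p.1 p.2)
      {p : ℝ × ℝ | 0 ≤ p.1 ∧ p.1 ≤ p.2 ∧ p.2 ≤ T})
    (hK : ∀ s t, 0 ≤ s → s ≤ t → t ≤ T →
      K s t = 1 - ∑ ι : Fin d, ∫ r in s..t, ∫ u in s..r,
        K s u * K u r * X' ι u * X' ι r)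
    (hK' : ∀ s t, 0 ≤ s → s ≤ t → t ≤ T →
      K' s t = 1 - ∑ ι : Fin d, ∫ r in s..t, ∫ u in s..r,
        K' s u * K' u r * X' ι u * X' ι r) :
    ∀ s t, 0 ≤ s → s ≤ t → t ≤ T → K s t = K' s t := by
  set Δ : Set (ℝ × ℝ) := {p : ℝ × ℝ | 0 ≤ p.1 ∧ p.1 ≤ p.2 ∧ p.2 ≤ T} with hΔdef
  have hΔclosed : IsClosed Δ := by
    apply IsClosed.inter (isClosed_le continuous_const continuous_fst)
    exact IsClosed.inter (isClosed_le continuous_fst continuous_snd)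
      (isClosed_le continuous_snd continuous_const)
  -- Tietze extensions of `K` and `K'`
  obtain ⟨g, hg⟩ := ContinuousMap.exists_restrict_eq (Y := ℝ) hΔclosed
    ⟨Δ.restrict (fun p : ℝ × ℝ => K p.1 p.2), hKc.restrict⟩
  obtain ⟨g', hg'⟩ := ContinuousMap.exists_restrict_eq (Y := ℝ) hΔclosed
    ⟨Δ.restrict (fun p : ℝ × ℝ => K' p.1 p.2), hK'c.restrict⟩
  have hgeq : ∀ p ∈ Δ, g p = K p.1 p.2 := by
    intro p hp
    have := congrFun (congrArg ContinuousMap.toFun hg) ⟨p, hp⟩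
    exact this
  have hg'eq : ∀ p ∈ Δ, g' p = K' p.1 p.2 := by
    intro p hp
    have := congrFun (congrArg ContinuousMap.toFun hg') ⟨p, hp⟩
    exact this
  set L : ℝ → ℝ → ℝ := fun s t => g (s, t) with hLdef
  set L' : ℝ → ℝ → ℝ := fun s t => g' (s, t) with hL'def
  have hLc : Continuous fun p : ℝ × ℝ => L p.1 p.2 := by
    simpa using g.continuous
  have hL'c : Continuous fun p : ℝ × ℝ => L' p.1 p.2 := by
    simpa using g'.continuous
  -- the extensions satisfy the same integral equation
  have hLeqK : ∀ s t : ℝ, 0 ≤ s → s ≤ t → t ≤ T → L s t = K s t := fun s t hs hst htT =>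
    hgeq (s, t) ⟨hs, hst, htT⟩
  have hL'eqK' : ∀ s t : ℝ, 0 ≤ s → s ≤ t → t ≤ T → L' s t = K' s t := fun s t hs hst htT =>
    hg'eq (s, t) ⟨hs, hst, htT⟩
  have hL : ∀ s t, 0 ≤ s → s ≤ t → t ≤ T →
      L s t = 1 - ∑ ι : Fin d, ∫ r in s..t, ∫ u in s..r,
        L s u * L u r * X' ι u * X' ι r := by
    intro s t hs hst htT
    rw [hLeqK s t hs hst htT, hK s t hs hst htT]
    congr 1
    refine Finset.sum_congr rfl fun ι _ => ?_
    apply intervalIntegral.integral_congr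
    intro r hr
    rw [Set.uIcc_of_le hst] at hr
    apply intervalIntegral.integral_congr
    intro u hu
    rw [Set.uIcc_of_le hr.1] at hu
    have h1 : K s u = L s u :=
      (hLeqK s u hs hu.1 ((hu.2.trans hr.2).trans htT)).symm
    have h2 : K u r = L u r :=
      (hLeqK u r (hs.trans hu.1) hu.2 (hr.2.trans htT)).symm
    show K s u * K u r * X' ι u * X' ι r = L s u * L u r * X' ι u * X' ι r
    rw [h1, h2]
  have hL' : ∀ s t, 0 ≤ s → s ≤ t → t ≤ T →
      L' s t = 1 - ∑ ι : Fin d, ∫ r in s..t, ∫ u in s..r,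
        L' s u * L' u r * X' ι u * X' ι r := by
    intro s t hs hst htT
    rw [hL'eqK' s t hs hst htT, hK' s t hs hst htT]
    congr 1
    refine Finset.sum_congr rfl fun ι _ => ?_
    apply intervalIntegral.integral_congr
    intro r hr
    rw [Set.uIcc_of_le hst] at hr
    apply intervalIntegral.integral_congr
    intro u hu
    rw [Set.uIcc_of_le hr.1] at hu
    have h1 : K' s u = L' s u :=
      (hL'eqK' s u hs hu.1 ((hu.2.trans hr.2).trans htT)).symm
    have h2 : K' u r = L' u r :=
      (hL'eqK' u r (hs.trans hu.1) hu.2 (hr.2.trans htT)).symm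
    show K' s u * K' u r * X' ι u * X' ι r = L' s u * L' u r * X' ι u * X' ι r
    rw [h1, h2]
  intro s t hs hst htT
  have := key d T hT X' hX' L L' hLc hL'c hL hL' s t hs hst htT
  rw [hLeqK s t hs hst htT, hL'eqK' s t hs hst htT] at this
  exact this
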